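/- Let V be a countable set with measure μ, and let u, v : V → ℝ. Suppose for some ε ∈ (0,1): u, v ∈ L^{2−ε}(V,μ) ∩ L^{2+ε}(V,μ) ∩ L²(V,μ). Then the limit lim_{t→0} (1/t)·∑_x [ (u+tv)²(x) log((u+tv)(x)²) − u(x)² log(u(x)²) ] μ(x) exists and equals 2∑_x [u(x)v(x) + u(x)v(x) log(u(x)²)] μ(x). -/

import Mathlib

open Real Filter Topology

private lemma abs_mul_log_sq_le {ε : ℝ} (hε0 : 0 < ε) (s : ℝ) :
    |s * Real.log (s ^ 2)| ≤ (2 / ε) * (|s| ^ (1 - ε) + |s| ^ (1 + ε)) := by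
  rcases eq_or_ne s 0 with rfl | hs
  · simp
    positivity
  · have hs' : (0:ℝ) < |s| := abs_pos.mpr hs
    have hlog : Real.log (s ^ 2) = 2 * Real.log |s| := by
      rw [← sq_abs, Real.log_pow]; norm_num
    have h1 : Real.log |s| ≤ |s| ^ ε / ε := Real.log_le_rpow_div (abs_nonneg s) hε0
    have h2 : -Real.log |s| ≤ |s| ^ (-ε) / ε := by
      rw [← Real.log_inv]
      calc Real.log |s|⁻¹ ≤ (|s|⁻¹) ^ ε / ε := Real.log_le_rpow_div (by positivity) hε0
        _ = |s| ^ (-ε) / ε := by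
          rw [Real.inv_rpow (abs_nonneg s), ← Real.rpow_neg (abs_nonneg s)]
    have ha0 : (0:ℝ) ≤ |s| ^ ε / ε := by positivity
    have hb0 : (0:ℝ) ≤ |s| ^ (-ε) / ε := by positivity
    have hsplit : (|s| ^ ε + |s| ^ (-ε)) / ε = |s| ^ ε / ε + |s| ^ (-ε) / ε :=
      add_div _ _ _
    have habs : |Real.log (|s|)| ≤ (|s| ^ ε + |s| ^ (-ε)) / ε :=
      abs_le.mpr ⟨by linarith, by linarith⟩
    have ha : |s| ^ (1 + ε) = |s| * |s| ^ ε := by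
      rw [Real.rpow_add hs', Real.rpow_one]
    have hb : |s| ^ (1 - ε) = |s| * |s| ^ (-ε) := by
      rw [sub_eq_add_neg, Real.rpow_add hs', Real.rpow_one]
    calc |s * Real.log (s ^ 2)| = |s| * (2 * |Real.log (|s|)|) := by
          rw [abs_mul, hlog, abs_mul, abs_two]
      _ ≤ |s| * (2 * ((|s| ^ ε + |s| ^ (-ε)) / ε)) := by gcongr
      _ = (2 / ε) * (|s| ^ (1 - ε) + |s| ^ (1 + ε)) := by
          rw [ha, hb]; field_simp; ring

private lemma abs_le_rpow_add {ε : ℝ} (hε0 : 0 < ε) (hε1 : ε < 1) (s : ℝ) :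
    |s| ≤ |s| ^ (1 - ε) + |s| ^ (1 + ε) := by
  rcases eq_or_ne s 0 with rfl | hs
  · simp [Real.zero_rpow (show (1:ℝ) - ε ≠ 0 by linarith),
      Real.zero_rpow (show (1:ℝ) + ε ≠ 0 by positivity)]
  · have hs' : (0:ℝ) < |s| := abs_pos.mpr hs
    rcases le_total |s| 1 with h | h
    · calc |s| = |s| ^ (1:ℝ) := (Real.rpow_one _).symm
        _ ≤ |s| ^ (1 - ε) := Real.rpow_le_rpow_of_exponent_ge hs' h (by linarith)
        _ ≤ _ := le_add_of_nonneg_right (by positivity)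
    · calc |s| = |s| ^ (1:ℝ) := (Real.rpow_one _).symm
        _ ≤ |s| ^ (1 + ε) := Real.rpow_le_rpow_of_exponent_le h (by linarith)
        _ ≤ _ := le_add_of_nonneg_left (by positivity)

private lemma phi'_bound {ε : ℝ} (hε0 : 0 < ε) (hε1 : ε < 1) (s : ℝ) :
    |2 * s * Real.log (s ^ 2) + 2 * s| ≤ (4 / ε + 2) * (|s| ^ (1 - ε) + |s| ^ (1 + ε)) := by
  have h1 := abs_mul_log_sq_le hε0 s
  have h2 := abs_le_rpow_add hε0 hε1 s
  have key : (4 / ε + 2) * (|s| ^ (1 - ε) + |s| ^ (1 + ε))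
      = 2 * ((2 / ε) * (|s| ^ (1 - ε) + |s| ^ (1 + ε)))
        + 2 * (|s| ^ (1 - ε) + |s| ^ (1 + ε)) := by
    field_simp; ring
  calc |2 * s * Real.log (s ^ 2) + 2 * s|
      ≤ |2 * s * Real.log (s ^ 2)| + |2 * s| := abs_add_le _ _
    _ = 2 * |s * Real.log (s ^ 2)| + 2 * |s| := by
        simp only [abs_mul, abs_two]; ring
    _ ≤ _ := by rw [key]; gcongr

private lemma phi_hasDerivAt (s : ℝ) :
    HasDerivAt (fun y : ℝ => y ^ 2 * Real.log (y ^ 2))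
      (2 * s * Real.log (s ^ 2) + 2 * s) s := by
  rcases eq_or_ne s 0 with rfl | hs
  · have h0 : (2:ℝ) * 0 * Real.log (0 ^ 2) + 2 * 0 = 0 := by norm_num
    rw [h0, hasDerivAt_iff_tendsto_slope]
    apply squeeze_zero_norm'
      (a := fun t : ℝ => 4 * (|t| ^ ((1:ℝ)/2) + |t| ^ ((3:ℝ)/2)))
    · filter_upwards [eventually_mem_nhdsWithin] with t ht
      have ht0 : t ≠ 0 := ht
      have : slope (fun y : ℝ => y ^ 2 * Real.log (y ^ 2)) 0 t = t * Real.log (t ^ 2) := by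
        rw [slope_def_field]
        field_simp
        ring
      rw [this, Real.norm_eq_abs]
      have := abs_mul_log_sq_le (ε := 1/2) (by norm_num) t
      norm_num at this ⊢
      convert this using 3 <;> norm_num
    · have habs : Tendsto (fun t : ℝ => |t|) (𝓝 0) (𝓝 0) := by
        simpa using continuous_abs.tendsto (0:ℝ)
      have hp : ∀ c : ℝ, 0 < c → Tendsto (fun t : ℝ => |t| ^ c) (𝓝 0) (𝓝 0) := by
        intro c hc
        have := (Real.continuousAt_rpow_const 0 c (Or.inr hc.le)).tendsto.comp habs
        simpa [Function.comp_def, Real.zero_rpow hc.ne'] using this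
      have h5 : Tendsto (fun t : ℝ => 4 * (|t| ^ ((1:ℝ)/2) + |t| ^ ((3:ℝ)/2)))
          (𝓝 0) (𝓝 (4 * (0 + 0))) :=
        ((hp _ (by norm_num : (0:ℝ) < 1/2)).add
          (hp _ (by norm_num : (0:ℝ) < 3/2))).const_mul (4:ℝ)
      have h6 := h5.mono_left (nhdsWithin_le_nhds (s := {(0:ℝ)}ᶜ))
      simpa using h6
  · have h1 : HasDerivAt (fun y : ℝ => y ^ 2) (2 * s) s := by
      simpa using hasDerivAt_pow 2 s
    have h3 : HasDerivAt (fun y : ℝ => Real.log (y ^ 2)) ((2 * s) / s ^ 2) s :=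
      h1.log (pow_ne_zero 2 hs)
    have h4 : HasDerivAt (fun y : ℝ => y ^ 2 * Real.log (y ^ 2)) _ s := h1.mul h3
    convert h4 using 1
    field_simp

theorem stmt_17 {V : Type*} [Countable V] (μ : V → ℝ) (hμ : ∀ x, 0 ≤ μ x)
    (ε : ℝ) (hε0 : 0 < ε) (hε1 : ε < 1) (u v : V → ℝ)
    (hu2m : Summable (fun x => |u x| ^ (2 - ε) * μ x))
    (hu2p : Summable (fun x => |u x| ^ (2 + ε) * μ x))
    (hu2 : Summable (fun x => |u x| ^ (2 : ℝ) * μ x))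
    (hv2m : Summable (fun x => |v x| ^ (2 - ε) * μ x))
    (hv2p : Summable (fun x => |v x| ^ (2 + ε) * μ x))
    (hv2 : Summable (fun x => |v x| ^ (2 : ℝ) * μ x)) :
    Filter.Tendsto
      (fun t : ℝ => (1 / t) *
        ∑' x, ((u x + t * v x) ^ 2 * Real.log ((u x + t * v x) ^ 2)
          - u x ^ 2 * Real.log (u x ^ 2)) * μ x)
      (nhdsWithin 0 {0}ᶜ)
      (nhds (2 * ∑' x, (u x * v x + u x * v x * Real.log (u x ^ 2)) * μ x)) := by
  have hK0 : (0:ℝ) < 4 / ε + 2 := by positivity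
  set K : ℝ := 4 / ε + 2 with hK
  set w : V → ℝ := fun x => |u x| + |v x| with hwdef
  have hw0 : ∀ x, 0 ≤ w x := fun x => add_nonneg (abs_nonneg _) (abs_nonneg _)
  -- summability of w^p μ
  have hsum : ∀ p : ℝ, 0 ≤ p → Summable (fun x => |u x| ^ p * μ x) →
      Summable (fun x => |v x| ^ p * μ x) → Summable (fun x => w x ^ p * μ x) := by
    intro p hp hsu hsv
    apply Summable.of_nonneg_of_le
      (fun x => mul_nonneg (Real.rpow_nonneg (hw0 x) p) (hμ x))
      (fun x => ?_) ((hsu.add hsv).mul_left ((2:ℝ) ^ p))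
    have h1 : w x ≤ 2 * max |u x| |v x| := by
      calc w x ≤ max (|u x|) (|v x|) + max (|u x|) (|v x|) :=
            add_le_add (le_max_left _ _) (le_max_right _ _)
        _ = 2 * max (|u x|) (|v x|) := (two_mul _).symm
    have h2 : w x ^ p ≤ 2 ^ p * max (|u x|) (|v x|) ^ p := by
      calc w x ^ p ≤ (2 * max (|u x|) (|v x|)) ^ p := Real.rpow_le_rpow (hw0 x) h1 hp
        _ = 2 ^ p * max (|u x|) (|v x|) ^ p :=
            Real.mul_rpow (by norm_num) (le_max_of_le_left (abs_nonneg _))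
    have h3 : max (|u x|) (|v x|) ^ p ≤ |u x| ^ p + |v x| ^ p := by
      rcases max_cases (|u x|) (|v x|) with ⟨he, _⟩ | ⟨he, _⟩ <;> rw [he]
      · exact le_add_of_nonneg_right (Real.rpow_nonneg (abs_nonneg _) _)
      · exact le_add_of_nonneg_left (Real.rpow_nonneg (abs_nonneg _) _)
    calc w x ^ p * μ x ≤ (2 ^ p * (|u x| ^ p + |v x| ^ p)) * μ x := by
          apply mul_le_mul_of_nonneg_right _ (hμ x)
          exact h2.trans (by gcongr)
      _ = 2 ^ p * (|u x| ^ p * μ x + |v x| ^ p * μ x) := by ring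
  have hS1 : Summable (fun x => w x ^ (2 - ε) * μ x) := hsum _ (by linarith) hu2m hv2m
  have hS2 : Summable (fun x => w x ^ (2 + ε) * μ x) := hsum _ (by linarith) hu2p hv2p
  set B : V → ℝ := fun x => K * (w x ^ (2 - ε) * μ x + w x ^ (2 + ε) * μ x) with hBdef
  have hBsum : Summable B := (hS1.add hS2).mul_left K
  simp only [← tsum_mul_left]
  apply tendsto_tsum_of_dominated_convergence hBsum
  · -- pointwise convergence
    intro x
    have hl : HasDerivAt (fun t : ℝ => u x + t * v x) (v x) 0 := by
      simpa using ((hasDerivAt_id (0:ℝ)).mul_const (v x)).const_add (u x)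
    have hfd : HasDerivAt
        (fun t : ℝ => (u x + t * v x) ^ 2 * Real.log ((u x + t * v x) ^ 2))
        ((2 * (u x + 0 * v x) * Real.log ((u x + 0 * v x) ^ 2) + 2 * (u x + 0 * v x)) * v x)
        0 := by have := (phi_hasDerivAt (u x + 0 * v x)).comp 0 hl; exact this
    have h1 := (hasDerivAt_iff_tendsto_slope.mp hfd).mul_const (μ x)
    have hval : (2 * (u x + 0 * v x) * Real.log ((u x + 0 * v x) ^ 2)
        + 2 * (u x + 0 * v x)) * v x * μ x
        = 2 * ((u x * v x + u x * v x * Real.log (u x ^ 2)) * μ x) := by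
      simp only [zero_mul, add_zero]; ring
    rw [hval] at h1
    apply h1.congr
    intro t
    rw [slope_def_field]
    simp only [zero_mul, add_zero, sub_zero]
    ring
  · -- uniform bound
    have hmem : ∀ᶠ t : ℝ in nhdsWithin 0 {0}ᶜ, t ∈ Set.Icc (-1:ℝ) 1 := by
      apply eventually_nhdsWithin_of_eventually_nhds
      exact eventually_of_mem (Icc_mem_nhds (by norm_num) (by norm_num)) (fun t ht => ht)
    filter_upwards [hmem] with t ht x
    have hvw : |v x| ≤ w x := le_add_of_nonneg_left (abs_nonneg _)
    set C : ℝ := K * (w x ^ (1 - ε) + w x ^ (1 + ε)) * |v x| with hCdef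
    have hC0 : 0 ≤ C := by
      apply mul_nonneg (mul_nonneg hK0.le _) (abs_nonneg _)
      exact add_nonneg (Real.rpow_nonneg (hw0 x) _) (Real.rpow_nonneg (hw0 x) _)
    have hderiv : ∀ θ ∈ Set.Icc (-1:ℝ) 1, HasDerivWithinAt
        (fun t : ℝ => (u x + t * v x) ^ 2 * Real.log ((u x + t * v x) ^ 2))
        ((2 * (u x + θ * v x) * Real.log ((u x + θ * v x) ^ 2) + 2 * (u x + θ * v x)) * v x)
        (Set.Icc (-1:ℝ) 1) θ := by
      intro θ hθ
      have hl : HasDerivAt (fun t : ℝ => u x + t * v x) (v x) θ := by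
        simpa using ((hasDerivAt_id θ).mul_const (v x)).const_add (u x)
      exact ((phi_hasDerivAt (u x + θ * v x)).comp θ hl).hasDerivWithinAt
    have hbound : ∀ θ ∈ Set.Icc (-1:ℝ) 1,
        ‖(2 * (u x + θ * v x) * Real.log ((u x + θ * v x) ^ 2) + 2 * (u x + θ * v x)) * v x‖
          ≤ C := by
      intro θ hθ
      have hle : |u x + θ * v x| ≤ w x := by
        calc |u x + θ * v x| ≤ |u x| + |θ * v x| := abs_add_le _ _
          _ = |u x| + |θ| * |v x| := by rw [abs_mul]
          _ ≤ |u x| + 1 * |v x| := by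
              gcongr
              exact abs_le.mpr ⟨hθ.1, hθ.2⟩
          _ = w x := by rw [one_mul]
      have h1 := phi'_bound hε0 hε1 (u x + θ * v x)
      have h2 : |u x + θ * v x| ^ (1 - ε) ≤ w x ^ (1 - ε) :=
        Real.rpow_le_rpow (abs_nonneg _) hle (by linarith)
      have h3 : |u x + θ * v x| ^ (1 + ε) ≤ w x ^ (1 + ε) :=
        Real.rpow_le_rpow (abs_nonneg _) hle (by linarith)
      rw [Real.norm_eq_abs, abs_mul]
      calc |2 * (u x + θ * v x) * Real.log ((u x + θ * v x) ^ 2) + 2 * (u x + θ * v x)| * |v x|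
          ≤ (K * (|u x + θ * v x| ^ (1 - ε) + |u x + θ * v x| ^ (1 + ε))) * |v x| :=
            mul_le_mul_of_nonneg_right h1 (abs_nonneg _)
        _ ≤ C := by
            rw [hCdef]
            gcongr
    have hmvt := Convex.norm_image_sub_le_of_norm_hasDerivWithin_le hderiv hbound (convex_Icc _ _)
      (Set.mem_Icc.mpr ⟨by norm_num, by norm_num⟩ : (0:ℝ) ∈ Set.Icc (-1:ℝ) 1) ht
    simp only [zero_mul, add_zero, sub_zero, Real.norm_eq_abs] at hmvt
    -- hmvt : |f t - u x ^2 log (u x^2)| ≤ C * |t|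
    have habs1 : |(1:ℝ)/t| * |t| ≤ 1 := by
      rcases eq_or_ne t 0 with rfl | ht0
      · simp
      · rw [← abs_mul, one_div, inv_mul_cancel₀ ht0, abs_one]
    calc ‖1 / t * (((u x + t * v x) ^ 2 * Real.log ((u x + t * v x) ^ 2)
            - u x ^ 2 * Real.log (u x ^ 2)) * μ x)‖
        = |1/t| * (|(u x + t * v x) ^ 2 * Real.log ((u x + t * v x) ^ 2)
            - u x ^ 2 * Real.log (u x ^ 2)| * μ x) := by
          rw [Real.norm_eq_abs, abs_mul, abs_mul, abs_of_nonneg (hμ x)]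
      _ ≤ |1/t| * ((C * |t|) * μ x) := by
          gcongr
          exact hμ x
      _ = (|1/t| * |t|) * (C * μ x) := by ring
      _ ≤ 1 * (C * μ x) := by
          apply mul_le_mul_of_nonneg_right habs1 (mul_nonneg hC0 (hμ x))
      _ = C * μ x := one_mul _
      _ ≤ B x := by
          rcases eq_or_lt_of_le (hw0 x) with hwx | hwx
          · have hv0 : |v x| = 0 := by
              have h1 := abs_nonneg (u x); have h2 := abs_nonneg (v x)
              simp only [w, hwdef] at hwx
              linarith [hwx]
            rw [hCdef, hv0, mul_zero, zero_mul]
            apply mul_nonneg hK0.le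
            exact add_nonneg (mul_nonneg (Real.rpow_nonneg (hw0 x) _) (hμ x))
              (mul_nonneg (Real.rpow_nonneg (hw0 x) _) (hμ x))
          · have e1 : w x ^ (1 - ε) * w x = w x ^ (2 - ε) := by
              rw [show (2:ℝ) - ε = (1 - ε) + 1 by ring, Real.rpow_add_one hwx.ne']
            have e2 : w x ^ (1 + ε) * w x = w x ^ (2 + ε) := by
              rw [show (2:ℝ) + ε = (1 + ε) + 1 by ring, Real.rpow_add_one hwx.ne']
            calc C * μ x
                = K * ((w x ^ (1 - ε) * |v x| + w x ^ (1 + ε) * |v x|) * μ x) := by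
                  rw [hCdef]; ring
              _ ≤ K * ((w x ^ (1 - ε) * w x + w x ^ (1 + ε) * w x) * μ x) := by
                  gcongr <;> first
                    | exact hK0.le | exact hμ x
                    | exact Real.rpow_nonneg (hw0 x) _ | exact hvw
              _ = B x := by rw [e1, e2, hBdef]; ring
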